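/- The free graded algebra Z[x̄] on a single generator x̄ of degree -1, equipped with the derivation differential d(x̄) = -x̄·x̄, satisfies d² = 0 and is acyclic in the sense that its homology is Z concentrated in degree 0 (the class of 1), i.e. every cycle of nonzero degree is a boundary. -/

import Mathlib

open PowerSeries

/-- The differential on `ℤ[[x̄]]`, where the generator `x̄` has degree `-1`,
determined by `d(x̄) = -x̄·x̄` and the graded Leibniz rule; on monomials,
`d(x̄^m) = -x̄^{m+1}` for `m` odd and `d(x̄^m) = 0` for `m` even. In terms of
coefficients: the `n`-th coefficient of `d f` is `-(coeff (n-1) f)` when `n` is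
even and nonzero, and `0` otherwise. -/
noncomputable def difDifferential (f : PowerSeries ℤ) : PowerSeries ℤ :=
  PowerSeries.mk fun n => if Even n ∧ n ≠ 0 then -(PowerSeries.coeff (n - 1) f) else 0

lemma difDifferential_coeff (f : PowerSeries ℤ) (n : ℕ) :
    PowerSeries.coeff n (difDifferential f) =
      if Even n ∧ n ≠ 0 then -(PowerSeries.coeff (n - 1) f) else 0 := by
  simp [difDifferential]

/-- **Acyclicity of the operad `Dif` (Proposition 3.2 of Markl).** The complex
`(ℤ[[x̄]], d)` with `deg x̄ = -1`, `d x̄ = -x̄²` satisfies `d² = 0`, every cycle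
of negative degree (i.e. every cycle `c • x̄^n`, `n ≥ 1`) is a boundary, every
degree-0 element `c • 1` is a cycle, and `c • 1` is a boundary only for
`c = 0`; hence `H_* ≅ ℤ`, concentrated in degree `0`. -/
theorem ideal_perturbation_stmt16 :
    (∀ f : PowerSeries ℤ, difDifferential (difDifferential f) = 0) ∧
    (∀ n : ℕ, 1 ≤ n → ∀ c : ℤ,
      difDifferential (c • (PowerSeries.X : PowerSeries ℤ) ^ n) = 0 →
      ∃ g : PowerSeries ℤ, difDifferential g = c • (PowerSeries.X : PowerSeries ℤ) ^ n) ∧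
    (∀ c : ℤ, difDifferential (c • (1 : PowerSeries ℤ)) = 0) ∧
    (∀ c : ℤ, ∀ f : PowerSeries ℤ,
      difDifferential f = c • (1 : PowerSeries ℤ) → c = 0) := by
  refine ⟨?_, ?_, ?_, ?_⟩
  · intro f
    ext n
    rw [difDifferential_coeff, map_zero]
    split_ifs with h
    · obtain ⟨he, hn⟩ := h
      rw [difDifferential_coeff]
      have : ¬ (Even (n - 1) ∧ n - 1 ≠ 0) := by
        rintro ⟨ho, hn1⟩
        have hn2 : 2 ≤ n := by
          rcases he with ⟨k, hk⟩
          omega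
        have : Even ((n - 1) + 1) := by
          have : (n - 1) + 1 = n := by omega
          rw [this]; exact he
        exact (Nat.even_add_one.mp this) ho
      rw [if_neg this, neg_zero]
    · rfl
  · intro n hn c hc
    rcases Nat.even_or_odd n with he | ho
    · -- n even ≥ 2, take g = -c • X^(n-1)
      refine ⟨(-c) • PowerSeries.X ^ (n - 1), ?_⟩
      ext k
      rw [difDifferential_coeff]
      erw [PowerSeries.coeff_smul, PowerSeries.coeff_smul]
      simp only [PowerSeries.coeff_smul, PowerSeries.coeff_X_pow, smul_eq_mul]
      have hn2 : 2 ≤ n := by rcases he with ⟨j, hj⟩; omega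
      split_ifs with h h2 h3 h3 h4
      · ring
      · exfalso; obtain ⟨_, hk0⟩ := h; omega
      · exfalso; omega
      · ring
      · exfalso; exact h ⟨h4 ▸ he, by omega⟩
      · ring
    · -- n odd: d(c•X^n) has coeff c at n+1, so c = 0
      have h1 := congrArg (PowerSeries.coeff (n + 1)) hc
      rw [difDifferential_coeff, map_zero] at h1
      have heven : Even (n + 1) := Nat.even_add_one.mpr (Nat.not_even_iff_odd.mpr ho)
      rw [if_pos ⟨heven, by omega⟩] at h1
      erw [PowerSeries.coeff_smul] at h1
      simp only [Nat.add_sub_cancel, PowerSeries.coeff_smul, PowerSeries.coeff_X_pow,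
        if_pos rfl, smul_eq_mul, mul_one, neg_eq_zero] at h1
      have hc0 : c = 0 := by simpa using h1
      refine ⟨0, ?_⟩
      subst hc0
      ext k
      simp [difDifferential]
  · intro c
    ext n
    rw [difDifferential_coeff, map_zero]
    split_ifs with h
    · obtain ⟨he, hn⟩ := h
      have : n - 1 ≠ 0 := by
        rcases he with ⟨k, hk⟩
        omega
      rw [show ((c • (1 : PowerSeries ℤ)) = PowerSeries.C c) by simp [smul_eq_C_mul]]
      rw [PowerSeries.coeff_C, if_neg this, neg_zero]
    · rfl
  · intro c f hf
    have h := congrArg (PowerSeries.coeff 0) hf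
    rw [difDifferential_coeff] at h
    simp at h
    omega
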